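/- Let n ≥ 3 and let S be a 4-cap-free, n-cup-free configuration of size at least C(n-1,2)+1, with a fixed slope labeling and β(p) defined as the maximum size of a cup in S ending at p (β(p)=1 if none). Then for every i with 1 ≤ i ≤ n-1, the set R_i(S) = {p ∈ S : β(p) = i} is nonempty. -/

import Mathlib

variable {α : Type*} [LinearOrder α]

/-- Every consecutive triple of the list satisfies `f`. -/
def Triples (f : α → α → α → Prop) : List α → Prop
  | x :: y :: z :: l => f x y z ∧ Triples f (y :: z :: l)
  | _ => True

/-- `l` is a cup in the configuration `(S, cup)`: a nonempty increasing list of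
vertices of `S` all of whose consecutive triples are colored cup. -/
def IsCupIn (S : Finset α) (cup : α → α → α → Prop) (l : List α) : Prop :=
  l ≠ [] ∧ l.Chain' (· < ·) ∧ (∀ x ∈ l, x ∈ S) ∧ Triples cup l

/-- `l` is a cap in the configuration `(S, cup)`. -/
def IsCapIn (S : Finset α) (cup : α → α → α → Prop) (l : List α) : Prop :=
  l ≠ [] ∧ l.Chain' (· < ·) ∧ (∀ x ∈ l, x ∈ S) ∧ Triples (fun x y z => ¬ cup x y z) l

/-- The configuration has no cap with `a` (or more) vertices. -/
def CapFree (S : Finset α) (cup : α → α → α → Prop) (a : ℕ) : Prop :=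
  ∀ l : List α, IsCapIn S cup l → l.length < a

/-- The configuration has no cup with `b` (or more) vertices. -/
def CupFree (S : Finset α) (cup : α → α → α → Prop) (b : ℕ) : Prop :=
  ∀ l : List α, IsCupIn S cup l → l.length < b

def StartsAt (l : List α) (p : α) : Prop := l.head? = some p

def EndsAt (l : List α) (p : α) : Prop := l.getLast? = some p

/-- A weak `(a, b)`-gon: an `a`-cap and a `b`-cup sharing both endpoints. -/
def HasWeakGon (S : Finset α) (cup : α → α → α → Prop) (a b : ℕ) : Prop :=
  ∃ (A U : List α) (x y : α), IsCapIn S cup A ∧ A.length = a ∧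
    IsCupIn S cup U ∧ U.length = b ∧
    StartsAt A x ∧ StartsAt U x ∧ EndsAt A y ∧ EndsAt U y

/-- Two cups from `p` to `r` and from `q` to `s` are interweaved if `p < q ≤ r < s`. -/
def Interweaved (C₁ C₂ : List α) : Prop :=
  ∃ p r q s, StartsAt C₁ p ∧ EndsAt C₁ r ∧ StartsAt C₂ q ∧ EndsAt C₂ s ∧
    p < q ∧ q ≤ r ∧ r < s

/-- A laced `(n-1)`-cup: an `(n-1)`-cup from `p` to `q` together with a cup ending
at `p` and a cup starting at `q` whose sizes sum to `n - 1`. -/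
def IsLacedCup (S : Finset α) (cup : α → α → α → Prop) (n : ℕ) (C : List α) : Prop :=
  IsCupIn S cup C ∧ C.length = n - 1 ∧
  ∃ p q Cp Cq, StartsAt C p ∧ EndsAt C q ∧ IsCupIn S cup Cp ∧ IsCupIn S cup Cq ∧
    EndsAt Cp p ∧ StartsAt Cq q ∧ Cp.length + Cq.length = n - 1

/-- A slope labeling of an `a`-cap-free configuration: labels in `{1, …, a-2}`
such that `s x y ≤ s y z` forces `x y z` to be a cup. -/
def IsSlopeLabeling (S : Finset α) (cup : α → α → α → Prop) (a : ℕ) (s : α → α → ℕ) : Prop :=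
  (∀ x ∈ S, ∀ y ∈ S, x < y → 1 ≤ s x y ∧ s x y ≤ a - 2) ∧
  (∀ x ∈ S, ∀ y ∈ S, ∀ z ∈ S, x < y → y < z → s x y ≤ s y z → cup x y z)

/-- `α_i(p)`: maximum length of a cup ending at `p` with last edge of label `≤ i`
(`1` if there is no such cup). -/
noncomputable def alphaStat (S : Finset α) (cup : α → α → α → Prop) (s : α → α → ℕ)
    (i : ℕ) (p : α) : ℕ :=
  max 1 (sSup {k | ∃ (l : List α) (x : α), IsCupIn S cup l ∧ EndsAt l p ∧
    l.length = k ∧ l.dropLast.getLast? = some x ∧ s x p ≤ i})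

/-- `β(p)`: maximum length of a cup ending at `p` (`1` if there is none). -/
noncomputable def betaStat (S : Finset α) (cup : α → α → α → Prop) (p : α) : ℕ :=
  max 1 (sSup {k | ∃ l : List α, IsCupIn S cup l ∧ EndsAt l p ∧ l.length = k})

/-- The cup coloring of the mirror reflection. -/
def opCup (cup : α → α → α → Prop) : αᵒᵈ → αᵒᵈ → αᵒᵈ → Prop :=
  fun x y z => cup (OrderDual.ofDual z) (OrderDual.ofDual y) (OrderDual.ofDual x)

/-- The vertex set of the mirror reflection. -/
def opSet (S : Finset α) : Finset αᵒᵈ := S.map OrderDual.toDual.toEmbedding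

/-- The mirror reflection of a cap/cup. -/
def opList (l : List α) : List αᵒᵈ := (l.map OrderDual.toDual).reverse

/-! ### Auxiliary lemmas -/

section Aux

variable {S : Finset α} {cup : α → α → α → Prop} {s : α → α → ℕ} {n : ℕ}

private lemma triples_concat {f : α → α → α → Prop} :
    ∀ (l : List α) (a : α), Triples f (l ++ [a]) → Triples f l
  | [], _, _ => trivial
  | [_], _, _ => trivial
  | [_, _], _, _ => trivial
  | x :: y :: z :: t, a, h => ⟨h.1, triples_concat (y :: z :: t) a h.2⟩

private lemma triples_snoc {f : α → α → α → Prop} {x p q : α} (hf : f x p q) :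
    ∀ (l₀ : List α), Triples f (l₀ ++ [x, p]) → Triples f (l₀ ++ [x, p, q])
  | [], _ => ⟨hf, trivial⟩
  | [u], h => ⟨h.1, hf, trivial⟩
  | [u, v], h => ⟨h.1, h.2.1, hf, trivial⟩
  | u :: v :: w :: t, h => ⟨h.1, triples_snoc hf (v :: w :: t) h.2⟩

private lemma ends_decomp {l : List α} {p x : α} (h1 : l.getLast? = some p)
    (h2 : l.dropLast.getLast? = some x) : ∃ l₀, l = l₀ ++ [x, p] := by
  rcases List.eq_nil_or_concat l with rfl | ⟨l', y, rfl⟩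
  · simp at h1
  · rw [List.concat_eq_append] at *
    rw [List.getLast?_concat] at h1
    rw [List.dropLast_concat] at h2
    rcases List.eq_nil_or_concat l' with rfl | ⟨l'', z, rfl⟩
    · simp at h2
    · rw [List.concat_eq_append] at *
      rw [List.getLast?_concat] at h2
      obtain rfl : y = p := by injection h1
      obtain rfl : z = x := by injection h2
      exact ⟨l'', by simp⟩

private lemma getLast?_pair_concat (l₀ : List α) (x p : α) :
    (l₀ ++ [x, p]).getLast? = some p := by
  rw [show l₀ ++ [x, p] = (l₀ ++ [x]) ++ [p] by simp, List.getLast?_concat]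

private lemma cup_singleton {p : α} (hp : p ∈ S) : IsCupIn S cup [p] :=
  ⟨by simp, List.isChain_singleton p, by simpa using hp, trivial⟩

private lemma cup_pair {p q : α} (hp : p ∈ S) (hq : q ∈ S) (hpq : p < q) :
    IsCupIn S cup [p, q] :=
  ⟨by simp, List.isChain_pair.mpr hpq, by simp [hp, hq], trivial⟩

private lemma chain'_last_lt {l₀ : List α} {x p : α}
    (h : (l₀ ++ [x, p]).Chain' (· < ·)) : x < p := by
  have := (List.isChain_append.mp h).2.1
  exact List.isChain_pair.mp this

private lemma cup_snoc {l₀ : List α} {x p q : α}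
    (hl : IsCupIn S cup (l₀ ++ [x, p])) (hq : q ∈ S) (hpq : p < q)
    (hc : cup x p q) : IsCupIn S cup (l₀ ++ [x, p, q]) := by
  obtain ⟨hne, hch, hmem, htr⟩ := hl
  have hsplit : l₀ ++ [x, p, q] = (l₀ ++ [x, p]) ++ [q] := by simp
  refine ⟨by simp, ?_, ?_, ?_⟩
  · rw [hsplit]
    show List.IsChain _ _
    rw [List.isChain_append]
    refine ⟨hch, List.isChain_singleton q, ?_⟩
    intro a ha b hb
    rw [getLast?_pair_concat] at ha
    simp only [List.head?_cons, Option.mem_def, Option.some.injEq] at ha hb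
    subst ha; subst hb; exact hpq
  · intro z hz
    rw [hsplit] at hz
    rcases List.mem_append.mp hz with h | h
    · exact hmem z h
    · simp only [List.mem_singleton] at h
      subst h; exact hq
  · exact triples_snoc hc l₀ htr

/-- The set of lengths of cups ending at `p`. -/
private def Bset (S : Finset α) (cup : α → α → α → Prop) (p : α) : Set ℕ :=
  {k | ∃ l : List α, IsCupIn S cup l ∧ EndsAt l p ∧ l.length = k}

private lemma betaStat_eq (p : α) : betaStat S cup p = max 1 (sSup (Bset S cup p)) := rfl

private lemma bddB (hncf : CupFree S cup n) (p : α) : BddAbove (Bset S cup p) :=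
  ⟨n, fun k ⟨l, hl, _, hlen⟩ => hlen ▸ (hncf l hl).le⟩

private lemma memB_le_beta (hncf : CupFree S cup n) {p : α} {k : ℕ}
    (hk : k ∈ Bset S cup p) : k ≤ betaStat S cup p :=
  (le_csSup (bddB hncf p) hk).trans (le_max_right _ _)

private lemma one_memB {p : α} (hp : p ∈ S) : 1 ∈ Bset S cup p :=
  ⟨[p], cup_singleton hp, by simp [EndsAt], rfl⟩

private lemma beta_realize (hncf : CupFree S cup n) {p : α} (hp : p ∈ S) :
    ∃ l : List α, IsCupIn S cup l ∧ EndsAt l p ∧ l.length = betaStat S cup p := by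
  have hne : (Bset S cup p).Nonempty := ⟨1, one_memB hp⟩
  have hmem := Nat.sSup_mem hne (bddB hncf p)
  have h1 : 1 ≤ sSup (Bset S cup p) := le_csSup (bddB hncf p) (one_memB hp)
  have : betaStat S cup p = sSup (Bset S cup p) := max_eq_right h1
  rw [this]
  exact hmem

private lemma beta_le (hn : 3 ≤ n) (hncf : CupFree S cup n) (p : α) :
    betaStat S cup p ≤ n - 1 := by
  rw [betaStat_eq]
  refine max_le (by omega) ?_
  rcases Set.eq_empty_or_nonempty (Bset S cup p) with he | hne
  · rw [he, csSup_empty]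
    exact Nat.zero_le _
  · exact csSup_le hne fun k ⟨l, hl, _, hlen⟩ => by have := hncf l hl; omega

/-- The set of lengths of cups ending at `p` whose last edge has label `≤ 1`. -/
private def Aset (S : Finset α) (cup : α → α → α → Prop) (s : α → α → ℕ) (p : α) : Set ℕ :=
  {k | ∃ (l : List α) (x : α), IsCupIn S cup l ∧ EndsAt l p ∧
    l.length = k ∧ l.dropLast.getLast? = some x ∧ s x p ≤ 1}

private lemma alphaStat_eq (p : α) :
    alphaStat S cup s 1 p = max 1 (sSup (Aset S cup s p)) := rfl

private lemma bddA (hncf : CupFree S cup n) (p : α) : BddAbove (Aset S cup s p) :=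
  ⟨n, fun k ⟨l, _, hl, _, hlen, _⟩ => hlen ▸ (hncf l hl).le⟩

private lemma memA_le_alpha (hncf : CupFree S cup n) {p : α} {k : ℕ}
    (hk : k ∈ Aset S cup s p) : k ≤ alphaStat S cup s 1 p :=
  (le_csSup (bddA hncf p) hk).trans (le_max_right _ _)

private lemma alpha_pos (p : α) : 1 ≤ alphaStat S cup s 1 p := le_max_left _ _

private lemma alpha_le_beta (hncf : CupFree S cup n) (p : α) :
    alphaStat S cup s 1 p ≤ betaStat S cup p := by
  rw [alphaStat_eq]
  refine max_le (le_max_left _ _) ?_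
  rcases Set.eq_empty_or_nonempty (Aset S cup s p) with he | hne
  · rw [he, csSup_empty]; exact Nat.zero_le _
  · exact csSup_le hne fun k ⟨l, x, hl, he, hlen, _, _⟩ =>
      memB_le_beta hncf ⟨l, hl, he, hlen⟩

private lemma alpha_realize (hncf : CupFree S cup n) {p : α}
    (h2 : 2 ≤ alphaStat S cup s 1 p) :
    ∃ (l : List α) (x : α), IsCupIn S cup l ∧ EndsAt l p ∧
      l.length = alphaStat S cup s 1 p ∧ l.dropLast.getLast? = some x ∧ s x p ≤ 1 := by
  have hne : (Aset S cup s p).Nonempty := by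
    rcases Set.eq_empty_or_nonempty (Aset S cup s p) with he | hne
    · exfalso
      rw [alphaStat_eq, he, csSup_empty] at h2
      simp at h2
    · exact hne
  have hmem := Nat.sSup_mem hne (bddA hncf p)
  have heq : alphaStat S cup s 1 p = sSup (Aset S cup s p) := by
    rw [alphaStat_eq] at h2 ⊢
    omega
  rw [heq]
  exact hmem

/-- If `s p q = 1` then `α₁` strictly increases from `p` to `q`. -/
private lemma stepA (hs : IsSlopeLabeling S cup 4 s) (hncf : CupFree S cup n)
    {p q : α} (hp : p ∈ S) (hq : q ∈ S) (hpq : p < q) (h1 : s p q = 1) :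
    alphaStat S cup s 1 p + 1 ≤ alphaStat S cup s 1 q := by
  refine memA_le_alpha hncf ?_
  rcases le_or_gt (alphaStat S cup s 1 p) 1 with hle | hlt
  · have hAp : alphaStat S cup s 1 p = 1 := le_antisymm hle (alpha_pos p)
    rw [hAp]
    exact ⟨[p, q], p, cup_pair hp hq hpq, by simp [EndsAt], rfl, by simp, h1.le⟩
  · obtain ⟨l, x, hcup, hend, hlen, hx, hsxp⟩ := alpha_realize (s := s) (p := p) hncf (by omega)
    obtain ⟨l₀, rfl⟩ := ends_decomp hend hx
    have hxS : x ∈ S := hcup.2.2.1 x (by simp)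
    have hxp : x < p := chain'_last_lt hcup.2.1
    have hc : cup x p q := hs.2 x hxS p hp q hq hxp hpq (by omega)
    refine ⟨l₀ ++ [x, p, q], p, cup_snoc hcup hq hpq hc, ?_, ?_, ?_, h1.le⟩
    · show (l₀ ++ [x, p, q]).getLast? = some q
      rw [show l₀ ++ [x, p, q] = (l₀ ++ [x, p]) ++ [q] by simp, List.getLast?_concat]
    · have : (l₀ ++ [x, p]).length = alphaStat S cup s 1 p := hlen
      simp only [List.length_append, List.length_cons] at this ⊢
      omega
    · rw [show l₀ ++ [x, p, q] = (l₀ ++ [x, p]) ++ [q] by simp, List.dropLast_concat]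
      exact getLast?_pair_concat l₀ x p

/-- If `s p q = 2` then `β` strictly increases from `p` to `q`. -/
private lemma stepB (hs : IsSlopeLabeling S cup 4 s) (hncf : CupFree S cup n)
    {p q : α} (hp : p ∈ S) (hq : q ∈ S) (hpq : p < q) (h2 : s p q = 2) :
    betaStat S cup p + 1 ≤ betaStat S cup q := by
  refine memB_le_beta hncf ?_
  obtain ⟨l, hcup, hend, hlen⟩ := beta_realize hncf hp
  rcases le_or_gt (betaStat S cup p) 1 with hle | hlt
  · have hBp : betaStat S cup p = 1 := le_antisymm hle (le_max_left _ _)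
    rw [hBp]
    exact ⟨[p, q], cup_pair hp hq hpq, by simp [EndsAt], rfl⟩
  · have hy : l.dropLast.getLast? ≠ none := by
      intro hnone
      have h0 : l.dropLast = [] := List.getLast?_eq_none_iff.mp hnone
      have := List.length_dropLast (xs := l)
      rw [h0] at this
      simp at this
      omega
    obtain ⟨x, hx⟩ := Option.ne_none_iff_exists'.mp hy
    obtain ⟨l₀, rfl⟩ := ends_decomp hend hx
    have hxS : x ∈ S := hcup.2.2.1 x (by simp)
    have hxp : x < p := chain'_last_lt hcup.2.1
    have hsxp : s x p ≤ 2 := by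
      have := (hs.1 x hxS p hp hxp).2
      omega
    have hc : cup x p q := hs.2 x hxS p hp q hq hxp hpq (by omega)
    refine ⟨l₀ ++ [x, p, q], cup_snoc hcup hq hpq hc, ?_, ?_⟩
    · show (l₀ ++ [x, p, q]).getLast? = some q
      rw [show l₀ ++ [x, p, q] = (l₀ ++ [x, p]) ++ [q] by simp, List.getLast?_concat]
    · have : (l₀ ++ [x, p]).length = betaStat S cup p := hlen
      simp only [List.length_append, List.length_cons] at this ⊢
      omega

/-- Descent: if some point has `β ≥ k ≥ 1`, then some point has `β = k`. -/
private lemma descent (hncf : CupFree S cup n) {k : ℕ} (hk : 1 ≤ k)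
    (hne : ∃ x ∈ S, k ≤ betaStat S cup x) : ∃ p ∈ S, betaStat S cup p = k := by
  classical
  set T : Finset α := S.filter (fun x => k ≤ betaStat S cup x) with hT
  have hTne : T.Nonempty := by
    obtain ⟨x, hxS, hxk⟩ := hne
    exact ⟨x, by simp [hT, hxS, hxk]⟩
  set x₀ : α := T.min' hTne with hx₀
  have hx₀T : x₀ ∈ T := T.min'_mem hTne
  have hx₀S : x₀ ∈ S := (Finset.mem_filter.mp hx₀T).1
  have hge : k ≤ betaStat S cup x₀ := (Finset.mem_filter.mp hx₀T).2
  refine ⟨x₀, hx₀S, le_antisymm ?_ hge⟩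
  by_contra hcon
  push_neg at hcon
  obtain ⟨l, hcup, hend, hlen⟩ := beta_realize hncf hx₀S
  have hy : l.dropLast.getLast? ≠ none := by
    intro hnone
    have h0 : l.dropLast = [] := List.getLast?_eq_none_iff.mp hnone
    have := List.length_dropLast (xs := l)
    rw [h0] at this
    simp at this
    omega
  obtain ⟨y, hyy⟩ := Option.ne_none_iff_exists'.mp hy
  obtain ⟨l₀, rfl⟩ := ends_decomp hend hyy
  have hyS : y ∈ S := hcup.2.2.1 y (by simp)
  have hyx : y < x₀ := chain'_last_lt hcup.2.1
  -- the prefix cup ending at y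
  have hpre : IsCupIn S cup (l₀ ++ [y]) := by
    obtain ⟨hne', hch, hmem, htr⟩ := hcup
    refine ⟨by simp, ?_, ?_, ?_⟩
    · have hP : (l₀ ++ [y, x₀]).Pairwise (· < ·) := List.isChain_iff_pairwise.mp hch
      have hsub : (l₀ ++ [y]).Sublist (l₀ ++ [y, x₀]) := by
        refine List.Sublist.append (List.Sublist.refl l₀) ?_
        simp
      exact List.isChain_iff_pairwise.mpr (hP.sublist hsub)
    · intro z hz
      refine hmem z ?_
      rcases List.mem_append.mp hz with h | h
      · exact List.mem_append.mpr (Or.inl h)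
      · simp only [List.mem_singleton] at h
        subst h; simp
    · exact triples_concat (l₀ ++ [y]) x₀ (by simpa using htr)
  have hyk : k ≤ betaStat S cup y := by
    have hmemB : (l₀ ++ [y]).length ∈ Bset S cup y :=
      ⟨l₀ ++ [y], hpre, List.getLast?_concat, rfl⟩
    have h1 := memB_le_beta hncf hmemB
    have h2 : (l₀ ++ [y, x₀]).length = betaStat S cup x₀ := hlen
    simp only [List.length_append, List.length_cons, List.length_nil] at h1 h2
    omega
  have hyT : y ∈ T := Finset.mem_filter.mpr ⟨hyS, hyk⟩
  exact absurd (T.min'_le y hyT) (not_le.mpr hyx)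

/-- Top: some point has `β ≥ n - 1`. -/
private lemma top_beta (hn : 3 ≤ n) (hncf : CupFree S cup n)
    (hcard : Nat.choose (n - 1) 2 + 1 ≤ S.card)
    (hs : IsSlopeLabeling S cup 4 s) :
    ∃ p ∈ S, n - 1 ≤ betaStat S cup p := by
  classical
  by_contra hcon
  push_neg at hcon
  -- injection p ↦ ⟨β p, α₁ p⟩
  set F : α → (Σ _ : ℕ, ℕ) := fun p => ⟨betaStat S cup p, alphaStat S cup s 1 p⟩ with hF
  set T : Finset (Σ _ : ℕ, ℕ) :=
    (Finset.Icc 1 (n - 2)).sigma (fun b => Finset.Icc 1 b) with hT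
  have hmap : ∀ p ∈ S, F p ∈ T := by
    intro p hp
    have h1 := beta_le hn hncf (cup := cup) p
    have h2 := hcon p hp
    have h3 := alpha_pos (S := S) (cup := cup) (s := s) p
    have h4 := alpha_le_beta (s := s) hncf p
    have h5 : 1 ≤ betaStat S cup p := le_max_left _ _
    simp only [hF, hT, Finset.mem_sigma, Finset.mem_Icc]
    omega
  have key : ∀ a b : α, a ∈ S → b ∈ S → a < b → F a ≠ F b := by
    intro a b ha hb hab heq
    have hβ : betaStat S cup a = betaStat S cup b := congrArg Sigma.fst heq
    have hα : alphaStat S cup s 1 a = alphaStat S cup s 1 b := by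
      have := (Sigma.mk.inj_iff.mp heq).2
      exact eq_of_heq this
    obtain ⟨hl1, hl2⟩ := hs.1 a ha b hb hab
    rcases Nat.lt_or_ge (s a b) 2 with hlab | hlab
    · have h1 : s a b = 1 := by omega
      have := stepA hs hncf ha hb hab h1
      omega
    · have h2 : s a b = 2 := by omega
      have := stepB hs hncf ha hb hab h2
      omega
  have hinj : Set.InjOn F S := by
    intro p hp q hq heq
    by_contra hne
    rcases lt_trichotomy p q with h | h | h
    · exact key p q hp hq h heq
    · exact hne h
    · exact key q p hq hp h heq.symm
  have hcard2 : S.card ≤ T.card := Finset.card_le_card_of_injOn F hmap hinj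
  have hTcard : T.card = Nat.choose (n - 1) 2 := by
    rw [hT, Finset.card_sigma]
    have h1 : ∀ b ∈ Finset.Icc 1 (n - 2), (Finset.Icc 1 b).card = b := by
      intro b _
      rw [Nat.card_Icc]
      omega
    rw [Finset.sum_congr rfl h1]
    have hsub : Finset.Icc 1 (n - 2) ⊆ Finset.range (n - 1) := by
      intro x hx
      simp only [Finset.mem_Icc] at hx
      simp only [Finset.mem_range]
      omega
    have h2 : ∑ b ∈ Finset.range (n - 1), b = ∑ b ∈ Finset.Icc 1 (n - 2), b :=
      (Finset.sum_subset hsub (fun x hx hnx => by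
        simp only [Finset.mem_range] at hx
        simp only [Finset.mem_Icc] at hnx
        omega)).symm
    rw [← h2, Finset.sum_range_id, Nat.choose_two_right]
  rw [hTcard] at hcard2
  omega

end Aux

theorem stmt14 (n : ℕ) (hn : 3 ≤ n) (S : Finset α) (cup : α → α → α → Prop)
    (h4 : CapFree S cup 4) (hncf : CupFree S cup n)
    (hcard : Nat.choose (n - 1) 2 + 1 ≤ S.card)
    (s : α → α → ℕ) (hs : IsSlopeLabeling S cup 4 s) :
    ∀ i : ℕ, 1 ≤ i → i ≤ n - 1 → ∃ p ∈ S, betaStat S cup p = i := by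
  intro i hi1 hi2
  obtain ⟨p, hpS, hp⟩ := top_beta hn hncf hcard hs
  exact descent hncf hi1 ⟨p, hpS, le_trans hi2 hp⟩
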